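/- Let (R,m) be Noetherian local of characteristic p > 0, N ⊆ M finitely generated modules, and L a minimal F-reduction of N in M (L ⊆ N, L^F_M = N^F_M, and no proper submodule of L has this property). Then the minimal number of generators of L equals the minimal number of generators of N^[q]_M for all sufficiently large powers q of p. Consequently all minimal F-reductions of N have the same minimal number of generators. -/

import Mathlib

open TensorProduct

/-- `R` viewed as an `R`-algebra via the `e`-th iterate of the Frobenius endomorphism. -/
def FrobTwist (R : Type*) [CommRing R] (p : ℕ) [Fact p.Prime] [CharP R p] (_e : ℕ) :
    Type _ := R

instance (R : Type*) [CommRing R] (p : ℕ) [Fact p.Prime] [CharP R p] (e : ℕ) :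
    CommRing (FrobTwist R p e) := ‹CommRing R›

noncomputable instance (R : Type*) [CommRing R] (p : ℕ) [Fact p.Prime] [CharP R p] (e : ℕ) :
    Algebra R (FrobTwist R p e) := (iterateFrobenius R p e).toAlgebra

/-- The `e`-th Frobenius functor applied to the `R`-module `M`:
`F^e(M) = FrobTwist R p e ⊗[R] M`, a module over `FrobTwist R p e` (which is `R` as a ring). -/
def FrobModule (R : Type*) [CommRing R] (p : ℕ) [Fact p.Prime] [CharP R p]
    (M : Type*) [AddCommGroup M] [Module R M] (e : ℕ) : Type _ :=
  FrobTwist R p e ⊗[R] M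

section
variable (R : Type*) [CommRing R] (p : ℕ) [Fact p.Prime] [CharP R p]
  (M : Type*) [AddCommGroup M] [Module R M] (e : ℕ)

noncomputable instance : AddCommGroup (FrobModule R p M e) :=
  inferInstanceAs (AddCommGroup (FrobTwist R p e ⊗[R] M))

noncomputable instance : Module (FrobTwist R p e) (FrobModule R p M e) :=
  inferInstanceAs (Module (FrobTwist R p e) (FrobTwist R p e ⊗[R] M))

/-- The image `z^q := F^e(z)` of `z ∈ M` in `F^e(M)`. -/
noncomputable def frobMap (z : M) : FrobModule R p M e := (1 : FrobTwist R p e) ⊗ₜ[R] z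

/-- The Frobenius power `N^{[q]}_M ⊆ F^e(M)` of a submodule `N ⊆ M`, `q = p^e`. -/
noncomputable def frobPow (N : Submodule R M) : Submodule (FrobTwist R p e) (FrobModule R p M e) :=
  Submodule.span (FrobTwist R p e) (frobMap R p M e '' N)

/-- An ideal of `R`, regarded as an ideal of `FrobTwist R p e` (the same ring). -/
def idealTwist (I : Ideal R) : Ideal (FrobTwist R p e) := I

/-- The Frobenius closure `N^F_M` of a submodule `N ⊆ M`, as a set. -/
noncomputable def frobClSet (N : Submodule R M) : Set M :=
  {z | ∃ e : ℕ, frobMap R p M e z ∈ frobPow R p M e N}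

/-- The special part of the Frobenius closure `N^{Fsp}_M`, as a set:
elements `z` with `z^q ∈ m·N^{[q]}_M` for some `q = p^e`. -/
noncomputable def frobSpSet [IsLocalRing R] (N : Submodule R M) : Set M :=
  {z | ∃ e : ℕ, frobMap R p M e z ∈
    idealTwist R p e (IsLocalRing.maximalIdeal R) • frobPow R p M e N}

end

/-- The minimal number of generators of a submodule. -/
noncomputable def minGens {A : Type*} [Semiring A] {X : Type*} [AddCommMonoid X]
    [Module A X] (L : Submodule A X) : ℕ :=
  sInf {k | ∃ s : Finset X, s.card = k ∧ Submodule.span A (s : Set X) = L}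


/-! ### Auxiliary machinery -/

section MinGensBasic

variable {A : Type*} [Semiring A] {X : Type*} [AddCommMonoid X] [Module A X]

lemma minGens_le_card {L : Submodule A X} {s : Finset X}
    (h : Submodule.span A (s : Set X) = L) : minGens L ≤ s.card :=
  Nat.sInf_le ⟨s, rfl, h⟩

lemma exists_minGens {L : Submodule A X} (hL : L.FG) :
    ∃ s : Finset X, s.card = minGens L ∧ Submodule.span A (s : Set X) = L := by
  obtain ⟨s, hs⟩ := hL
  have hne : {k | ∃ s : Finset X, s.card = k ∧ Submodule.span A (s : Set X) = L}.Nonempty :=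
    ⟨s.card, s, rfl, hs⟩
  exact Nat.sInf_mem hne

end MinGensBasic

lemma mem_ideal_smul_span_singleton {A X : Type*} [CommRing A] [AddCommGroup X] [Module A X]
    (I : Ideal A) (x : X) {y : X} (hy : y ∈ I • (Submodule.span A {x})) :
    ∃ c ∈ I, y = c • x := by
  refine Submodule.smul_induction_on hy ?_ ?_
  · intro r hr n hn
    obtain ⟨a, rfl⟩ := Submodule.mem_span_singleton.mp hn
    exact ⟨r * a, I.mul_mem_right a hr, smul_smul r a x⟩
  · rintro y1 y2 ⟨c1, hc1, rfl⟩ ⟨c2, hc2, rfl⟩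
    exact ⟨c1 + c2, I.add_mem hc1 hc2, (add_smul c1 c2 x).symm⟩

section Exchange
open Submodule IsLocalRing

set_option maxHeartbeats 1000000 in
lemma exchange {A X : Type*} [CommRing A] [IsLocalRing A] [AddCommGroup X] [Module A X]
    [DecidableEq X]
    {P : Submodule A X} (hP : P.FG) {s t : Finset X}
    (hs : Submodule.span A (s : Set X) = P) (ht : Submodule.span A (t : Set X) = P)
    (hcard : t.card < s.card) :
    ∃ z ∈ s, z ∈ (maximalIdeal A) • P ⊔ Submodule.span A ((s.erase z : Finset X) : Set X) := by
  classical
  set m := maximalIdeal A with hm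
  haveI : m.IsMaximal := IsLocalRing.maximalIdeal.isMaximal A
  let k := A ⧸ m
  letI : Field k := Ideal.Quotient.field m
  let Y := ↥P
  let Z := Y ⧸ (m • ⊤ : Submodule A Y)
  let π : Y →ₗ[A] Z := Submodule.mkQ _
  have hsP : ∀ x ∈ s, x ∈ P := fun x hx => hs ▸ subset_span hx
  have htP : ∀ x ∈ t, x ∈ P := fun x hx => ht ▸ subset_span hx
  let es : ↥s → Y := fun i => ⟨i.1, hsP i.1 i.2⟩
  let et : ↥t → Y := fun i => ⟨i.1, htP i.1 i.2⟩
  -- span of es over A is top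
  have hYfin : Module.Finite A Y := Module.Finite.iff_fg.mpr hP
  have hessp : Submodule.span A (Set.range es) = ⊤ := by
    apply Submodule.map_injective_of_injective P.injective_subtype
    rw [Submodule.map_span, Submodule.map_top, Submodule.range_subtype]
    have : P.subtype '' (Set.range es) = (s : Set X) := by
      ext x
      constructor
      · rintro ⟨y, ⟨i, rfl⟩, rfl⟩; exact i.2
      · intro hx; exact ⟨es ⟨x, hx⟩, ⟨⟨x, hx⟩, rfl⟩, rfl⟩
    rw [this, hs]
  have hetsp : Submodule.span A (Set.range et) = ⊤ := by
    apply Submodule.map_injective_of_injective P.injective_subtype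
    rw [Submodule.map_span, Submodule.map_top, Submodule.range_subtype]
    have : P.subtype '' (Set.range et) = (t : Set X) := by
      ext x
      constructor
      · rintro ⟨y, ⟨i, rfl⟩, rfl⟩; exact i.2
      · intro hx; exact ⟨et ⟨x, hx⟩, ⟨⟨x, hx⟩, rfl⟩, rfl⟩
    rw [this, ht]
  -- pushed to Z
  have hπsurj : Function.Surjective π := Submodule.mkQ_surjective _
  have hAs : Submodule.span A (Set.range (π ∘ es)) = ⊤ := by
    rw [Set.range_comp, ← Submodule.map_span, hessp, Submodule.map_top,
      Submodule.range_mkQ]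
  have hAt : Submodule.span A (Set.range (π ∘ et)) = ⊤ := by
    rw [Set.range_comp, ← Submodule.map_span, hetsp, Submodule.map_top,
      Submodule.range_mkQ]
  have halg : Function.Surjective (algebraMap A k) := Ideal.Quotient.mk_surjective
  have hks : Submodule.span k (Set.range (π ∘ es)) = ⊤ := by
    have := Submodule.restrictScalars_span A k halg (Set.range (π ∘ es))
    rw [hAs] at this
    exact Submodule.restrictScalars_injective A k Z (by rw [this]; rfl)
  have hkt : Submodule.span k (Set.range (π ∘ et)) = ⊤ := by
    have := Submodule.restrictScalars_span A k halg (Set.range (π ∘ et))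
    rw [hAt] at this
    exact Submodule.restrictScalars_injective A k Z (by rw [this]; rfl)
  have hZfinA : Module.Finite A Z := Module.Finite.of_surjective π hπsurj
  have hZfin : Module.Finite k Z := Module.Finite.of_restrictScalars_finite A k Z
  -- dimension bound
  have hdim : Module.finrank k Z ≤ t.card := by
    let T : Finset Z := Finset.univ.image (π ∘ et)
    have hT : (T : Set Z) = Set.range (π ∘ et) := by
      simp only [T, Finset.coe_image, Finset.coe_univ, Set.image_univ]
    have : Module.finrank k (Submodule.span k (T : Set Z)) ≤ T.card :=
      finrank_span_finset_le_card T
    rw [hT, hkt] at this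
    calc Module.finrank k Z = Module.finrank k (⊤ : Submodule k Z) := (finrank_top k Z).symm
      _ ≤ T.card := this
      _ ≤ t.card := by
        simpa [T] using Finset.card_image_le (s := Finset.univ) (f := π ∘ et)
  -- s-family is not linearly independent
  have hnli : ¬ LinearIndependent k (π ∘ es) := by
    intro hli
    have := hli.fintype_card_le_finrank
    rw [Fintype.card_coe] at this
    omega
  have hnli2 := mt (linearIndependent_iff_notMem_span (K := k) (v := ⇑π ∘ es)).mpr hnli
  push_neg at hnli2
  obtain ⟨i, hi⟩ := hnli2
  refine ⟨i.1, i.2, ?_⟩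
  -- convert back
  have hsub : (π ∘ es) '' (Set.univ \ {i}) ⊆ π '' (es '' (Set.univ \ {i})) := by
    rw [Set.image_comp]
  have hi' : (π ∘ es) i ∈ Submodule.span A (π '' (es '' (Set.univ \ {i}))) := by
    have := Submodule.restrictScalars_span A k halg (π '' (es '' (Set.univ \ {i})))
    have h2 : (π ∘ es) i ∈ Submodule.span k (π '' (es '' (Set.univ \ {i}))) :=
      Submodule.span_mono hsub hi
    rw [← this]
    exact h2
  rw [← Submodule.map_span] at hi'
  obtain ⟨w, hw, hww⟩ := hi'
  have hker : es i - w ∈ (m • ⊤ : Submodule A Y) := by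
    have hz : π (es i - w) = 0 := by
      rw [map_sub, hww, sub_eq_zero]; rfl
    exact (Submodule.Quotient.mk_eq_zero _).mp hz
  have h1 : ((es i - w : Y) : X) ∈ m • P := (Submodule.mem_smul_top_iff m P _).mp hker
  have h2 : (w : X) ∈ Submodule.span A ((s.erase i.1 : Finset X) : Set X) := by
    have : (w : X) ∈ Submodule.map P.subtype (Submodule.span A (es '' (Set.univ \ {i}))) :=
      ⟨w, hw, rfl⟩
    rw [Submodule.map_span] at this
    refine Submodule.span_mono ?_ this
    rintro x ⟨y, ⟨j, ⟨-, hj⟩, rfl⟩, rfl⟩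
    simp only [Finset.coe_erase, Set.mem_diff, Set.mem_singleton_iff]
    refine ⟨j.2, ?_⟩
    intro hxz
    apply hj
    exact Subtype.ext hxz
  have heq : (i.1 : X) = ((es i - w : Y) : X) + (w : X) := by
    rw [Submodule.coe_sub]
    simp [es]
  have hmem : ((es i - w : Y) : X) + (w : X) ∈ m • P ⊔ Submodule.span A ((s.erase i.1 : Finset X) : Set X) :=
    Submodule.add_mem _ (Submodule.mem_sup_left h1) (Submodule.mem_sup_right h2)
  rwa [← heq] at hmem

end Exchange

section FrobMachinery

variable (R : Type*) [CommRing R] (p : ℕ) [Fact p.Prime] [CharP R p]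
  (M : Type*) [AddCommGroup M] [Module R M]

instance (e : ℕ) [IsLocalRing R] : IsLocalRing (FrobTwist R p e) :=
  inferInstanceAs (IsLocalRing R)

instance (e : ℕ) [IsNoetherianRing R] : IsNoetherianRing (FrobTwist R p e) :=
  inferInstanceAs (IsNoetherianRing R)

noncomputable instance (e : ℕ) [Module.Finite R M] :
    Module.Finite (FrobTwist R p e) (FrobModule R p M e) :=
  inferInstanceAs (Module.Finite (FrobTwist R p e) (FrobTwist R p e ⊗[R] M))

instance (e : ℕ) : CharP (FrobTwist R p e) p := inferInstanceAs (CharP R p)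

instance (e : ℕ) : ExpChar (FrobTwist R p e) p := inferInstanceAs (ExpChar R p)

/-- The identity of `R`, viewed as a ring homomorphism between Frobenius twists. -/
def twistCast (e e' : ℕ) : FrobTwist R p e →+* FrobTwist R p e' where
  toFun a := (a : R)
  map_one' := rfl
  map_mul' _ _ := rfl
  map_zero' := rfl
  map_add' _ _ := rfl

/-- The "shift" on scalars, `a ↦ a^{p^d}`, as an `R`-linear map. -/
noncomputable def frobShiftScalar (e d : ℕ) : FrobTwist R p e →ₗ[R] FrobTwist R p (e + d) :=
  { toFun := ⇑((twistCast R p e (e + d)).comp (iterateFrobenius (FrobTwist R p e) p d))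
    map_add' := fun a b => map_add _ a b
    map_smul' := fun r a => by
      simp only [RingHom.id_apply]
      rw [Algebra.smul_def, Algebra.smul_def, map_mul]
      congr 1
      show ((r ^ p ^ e : R) ^ p ^ d : R) = (r ^ p ^ (e + d) : R)
      rw [← pow_mul, ← pow_add] }

/-- The shift map on `F^e(M)`. -/
noncomputable def frobShift (e d : ℕ) : FrobModule R p M e → FrobModule R p M (e + d) :=
  fun x => LinearMap.rTensor M (frobShiftScalar R p e d) x

lemma frobShift_zero (e d : ℕ) : frobShift R p M e d 0 = 0 :=
  map_zero (LinearMap.rTensor M (frobShiftScalar R p e d))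

lemma frobShift_add (e d : ℕ) (x y : FrobModule R p M e) :
    frobShift R p M e d (x + y) = frobShift R p M e d x + frobShift R p M e d y :=
  map_add (LinearMap.rTensor M (frobShiftScalar R p e d)) x y

lemma frobShift_smul (e d : ℕ) (s : FrobTwist R p e) (x : FrobModule R p M e) :
    frobShift R p M e d (s • x) = frobShiftScalar R p e d s • frobShift R p M e d x := by
  have key : ∀ y : FrobTwist R p e ⊗[R] M,
      LinearMap.rTensor M (frobShiftScalar R p e d) (s • y)
        = frobShiftScalar R p e d s • LinearMap.rTensor M (frobShiftScalar R p e d) y := by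
    intro y
    induction y using TensorProduct.induction_on with
    | zero => simp
    | tmul a z =>
      rw [TensorProduct.smul_tmul', LinearMap.rTensor_tmul, LinearMap.rTensor_tmul,
        TensorProduct.smul_tmul']
      congr 1
      exact map_mul ((twistCast R p e (e + d)).comp (iterateFrobenius (FrobTwist R p e) p d)) s a
    | add u v hu hv =>
      rw [smul_add, map_add, hu, hv, map_add, smul_add]
  exact key x

lemma frobShift_frobMap (e d : ℕ) (z : M) :
    frobShift R p M e d (frobMap R p M e z) = frobMap R p M (e + d) z := by
  show LinearMap.rTensor M (frobShiftScalar R p e d) ((1 : FrobTwist R p e) ⊗ₜ[R] z)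
    = (1 : FrobTwist R p (e + d)) ⊗ₜ[R] z
  rw [LinearMap.rTensor_tmul]
  congr 1
  exact one_pow _

lemma frobMap_zero (e : ℕ) : frobMap R p M e 0 = 0 :=
  TensorProduct.tmul_zero M (1 : FrobTwist R p e)

lemma frobMap_add (e : ℕ) (x y : M) :
    frobMap R p M e (x + y) = frobMap R p M e x + frobMap R p M e y :=
  TensorProduct.tmul_add (1 : FrobTwist R p e) x y

lemma frobMap_smul (e : ℕ) (r : R) (z : M) :
    frobMap R p M e (r • z)
      = (algebraMap R (FrobTwist R p e) r) • frobMap R p M e z := by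
  show (1 : FrobTwist R p e) ⊗ₜ[R] (r • z)
    = (algebraMap R (FrobTwist R p e) r) • ((1 : FrobTwist R p e) ⊗ₜ[R] z)
  rw [← TensorProduct.smul_tmul, TensorProduct.smul_tmul']
  congr 1

lemma frobShift_mem_span {e d : ℕ} {S : Set (FrobModule R p M e)} {x : FrobModule R p M e}
    (hx : x ∈ Submodule.span (FrobTwist R p e) S) :
    frobShift R p M e d x ∈ Submodule.span (FrobTwist R p (e + d)) (frobShift R p M e d '' S) := by
  induction hx using Submodule.span_induction with
  | mem y hy => exact Submodule.subset_span ⟨y, hy, rfl⟩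
  | zero => rw [frobShift_zero]; exact Submodule.zero_mem _
  | add u v _ _ hu hv => rw [frobShift_add]; exact Submodule.add_mem _ hu hv
  | smul s u _ hu => rw [frobShift_smul]; exact Submodule.smul_mem _ _ hu

lemma mem_frobPow_of_mem {P : Submodule R M} {z : M} (hz : z ∈ P) (e : ℕ) :
    frobMap R p M e z ∈ frobPow R p M e P :=
  Submodule.subset_span ⟨z, hz, rfl⟩

lemma frobPow_mono {P Q : Submodule R M} (h : P ≤ Q) (e : ℕ) :
    frobPow R p M e P ≤ frobPow R p M e Q :=
  Submodule.span_mono (Set.image_mono h)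

lemma frobShift_mem_frobPow {e d : ℕ} (P : Submodule R M) {x : FrobModule R p M e}
    (hx : x ∈ frobPow R p M e P) :
    frobShift R p M e d x ∈ frobPow R p M (e + d) P := by
  have h1 := frobShift_mem_span R p M (S := frobMap R p M e '' ↑P) (d := d) hx
  have h2 : frobShift R p M e d '' (frobMap R p M e '' (P : Set M))
      ⊆ frobMap R p M (e + d) '' (P : Set M) := by
    rintro - ⟨-, ⟨z, hz, rfl⟩, rfl⟩
    exact ⟨z, hz, (frobShift_frobMap R p M e d z).symm⟩
  exact Submodule.span_mono h2 h1

lemma mem_frobPow_mono_exp {e e' : ℕ} (h : e ≤ e') (P : Submodule R M) {z : M}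
    (hz : frobMap R p M e z ∈ frobPow R p M e P) :
    frobMap R p M e' z ∈ frobPow R p M e' P := by
  obtain ⟨d, rfl⟩ := Nat.exists_eq_add_of_le h
  rw [← frobShift_frobMap R p M e d z]
  exact frobShift_mem_frobPow R p M P hz

lemma frobPow_span (e : ℕ) (S : Set M) :
    frobPow R p M e (Submodule.span R S)
      = Submodule.span (FrobTwist R p e) (frobMap R p M e '' S) := by
  apply le_antisymm
  · refine Submodule.span_le.mpr ?_
    rintro - ⟨z, hz, rfl⟩
    induction hz using Submodule.span_induction with
    | mem y hy => exact Submodule.subset_span ⟨y, hy, rfl⟩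
    | zero => rw [frobMap_zero]; exact Submodule.zero_mem _
    | add u v _ _ hu hv => rw [frobMap_add]; exact Submodule.add_mem _ hu hv
    | smul r u _ hu => rw [frobMap_smul]; exact Submodule.smul_mem _ _ hu
  · exact Submodule.span_mono (Set.image_mono Submodule.subset_span)

lemma frobPow_sup (e : ℕ) (P Q : Submodule R M) :
    frobPow R p M e (P ⊔ Q) = frobPow R p M e P ⊔ frobPow R p M e Q := by
  have h1 : (P ⊔ Q : Submodule R M) = Submodule.span R ((P : Set M) ∪ (Q : Set M)) := by
    rw [Submodule.span_union, Submodule.span_eq, Submodule.span_eq]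
  rw [h1, frobPow_span, Set.image_union, Submodule.span_union]
  rfl

lemma exists_uniform_exponent (s : Finset M) (L' : Submodule R M)
    (h : ∀ z ∈ s, ∃ e, frobMap R p M e z ∈ frobPow R p M e L') :
    ∃ E, ∀ z ∈ s, frobMap R p M E z ∈ frobPow R p M E L' := by
  classical
  induction s using Finset.induction_on with
  | empty => exact ⟨0, by simp⟩
  | @insert a s ha ih =>
    obtain ⟨E₁, hE₁⟩ := ih fun z hz => h z (Finset.mem_insert_of_mem hz)
    obtain ⟨e₀, he₀⟩ := h a (Finset.mem_insert_self a s)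
    refine ⟨max e₀ E₁, fun z hz => ?_⟩
    rcases Finset.mem_insert.mp hz with rfl | hz'
    · exact mem_frobPow_mono_exp R p M (le_max_left _ _) L' he₀
    · exact mem_frobPow_mono_exp R p M (le_max_right _ _) L' (hE₁ z hz')

lemma mem_frobClSet_of_mem {P : Submodule R M} {z : M} (hz : z ∈ P) :
    z ∈ frobClSet R p M P :=
  ⟨0, mem_frobPow_of_mem R p M hz 0⟩

lemma frobClSet_mono {P Q : Submodule R M} (h : P ≤ Q) :
    frobClSet R p M P ⊆ frobClSet R p M Q := by
  rintro z ⟨e, hz⟩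
  exact ⟨e, frobPow_mono R p M h e hz⟩

lemma frobClSet_span_subset (s : Finset M) (L' : Submodule R M)
    (h : ∀ z ∈ s, z ∈ frobClSet R p M L') :
    frobClSet R p M (Submodule.span R (s : Set M)) ⊆ frobClSet R p M L' := by
  obtain ⟨E, hE⟩ := exists_uniform_exponent R p M s L' h
  rintro z ⟨e₂, hz⟩
  refine ⟨max e₂ E, ?_⟩
  have h1 : frobMap R p M (max e₂ E) z ∈ frobPow R p M (max e₂ E) (Submodule.span R (s : Set M)) :=
    mem_frobPow_mono_exp R p M (le_max_left _ _) _ hz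
  rw [frobPow_span] at h1
  refine Submodule.span_le.mpr ?_ h1
  rintro - ⟨y, hy, rfl⟩
  exact mem_frobPow_mono_exp R p M (le_max_right _ _) L' (hE y hy)

lemma minGens_frobPow_le [IsNoetherianRing R] [Module.Finite R M] (e : ℕ) (L : Submodule R M) :
    minGens (frobPow R p M e L) ≤ minGens L := by
  classical
  obtain ⟨s, hcard, hspan⟩ := exists_minGens (IsNoetherian.noetherian L)
  have hsp : Submodule.span (FrobTwist R p e)
      ((s.image (frobMap R p M e) : Finset (FrobModule R p M e)) : Set (FrobModule R p M e))
      = frobPow R p M e L := by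
    rw [Finset.coe_image, ← frobPow_span, hspan]
  calc minGens (frobPow R p M e L) ≤ (s.image (frobMap R p M e)).card := minGens_le_card hsp
    _ ≤ s.card := Finset.card_image_le
    _ = minGens L := hcard

end FrobMachinery

section MainArgument

variable (R : Type*) [CommRing R] [IsNoetherianRing R] [IsLocalRing R]
  (p : ℕ) [Fact p.Prime] [CharP R p]
  (M : Type*) [AddCommGroup M] [Module R M] [Module.Finite R M]

/-- Eventually the Frobenius powers of `N` and of an `F`-reduction `L` agree. -/
lemma frobPow_eventually_eq (N L : Submodule R M) (hLN : L ≤ N)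
    (hred : frobClSet R p M L = frobClSet R p M N) :
    ∃ e₀, ∀ e ≥ e₀, frobPow R p M e N = frobPow R p M e L := by
  classical
  obtain ⟨t, htspan⟩ := (IsNoetherian.noetherian N : N.FG)
  have h : ∀ z ∈ t, ∃ e, frobMap R p M e z ∈ frobPow R p M e L := by
    intro z hz
    have hzN : z ∈ frobClSet R p M N :=
      mem_frobClSet_of_mem R p M (htspan ▸ Submodule.subset_span (Finset.mem_coe.mpr hz))
    rw [← hred] at hzN
    exact hzN
  obtain ⟨E, hE⟩ := exists_uniform_exponent R p M t L h
  refine ⟨E, fun e he => le_antisymm ?_ (frobPow_mono R p M hLN e)⟩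
  rw [← htspan, frobPow_span]
  refine Submodule.span_le.mpr ?_
  rintro - ⟨z, hz, rfl⟩
  exact mem_frobPow_mono_exp R p M he L (hE z (Finset.mem_coe.mp hz))

/-- Core argument: for a minimal `F`-reduction `L`, the Frobenius powers of `L` have the
same minimal number of generators as `L` itself. -/
lemma minGens_frobPow_eq (N L : Submodule R M) (hLN : L ≤ N)
    (hred : frobClSet R p M L = frobClSet R p M N)
    (hmin : ∀ P : Submodule R M, P < L → frobClSet R p M P ≠ frobClSet R p M N)
    (e : ℕ) : minGens (frobPow R p M e L) = minGens L := by
  classical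
  refine le_antisymm (minGens_frobPow_le R p M e L) ?_
  by_contra hlt
  push_neg at hlt
  obtain ⟨s, hcard, hspan⟩ := exists_minGens (IsNoetherian.noetherian L : L.FG)
  set A := FrobTwist R p e with hA
  have hFfg : (frobPow R p M e L).FG := IsNoetherian.noetherian (frobPow R p M e L)
  have hsspan : Submodule.span A ((s.image (frobMap R p M e) : Finset (FrobModule R p M e)) :
      Set (FrobModule R p M e)) = frobPow R p M e L := by
    rw [Finset.coe_image, ← frobPow_span, hspan]
  obtain ⟨t, htcard, htspan⟩ := exists_minGens hFfg
  -- find a redundant generator `z₀`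
  have hz₀ : ∃ z₀ ∈ s, frobMap R p M e z₀ ∈
      (IsLocalRing.maximalIdeal A) • frobPow R p M e L ⊔
        frobPow R p M e (Submodule.span R ((s.erase z₀ : Finset M) : Set M)) := by
    by_cases hinj : (s.image (frobMap R p M e)).card = s.card
    · have hc : t.card < (s.image (frobMap R p M e)).card := by
        rw [hinj, hcard, htcard]
        exact hlt
      obtain ⟨w, hw, hwmem⟩ := exchange hFfg hsspan htspan hc
      obtain ⟨z₀, hz₀s, rfl⟩ := Finset.mem_image.mp hw
      refine ⟨z₀, hz₀s, ?_⟩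
      have hle : Submodule.span A
          ((((s.image (frobMap R p M e)).erase (frobMap R p M e z₀)) : Finset (FrobModule R p M e)) :
            Set (FrobModule R p M e))
          ≤ frobPow R p M e (Submodule.span R ((s.erase z₀ : Finset M) : Set M)) := by
        rw [frobPow_span]
        apply Submodule.span_mono
        intro x hx
        rw [Finset.mem_coe, Finset.mem_erase] at hx
        obtain ⟨hxne, hximg⟩ := hx
        obtain ⟨y, hy, rfl⟩ := Finset.mem_image.mp hximg
        have hyne : y ≠ z₀ := fun hyz => hxne (by rw [hyz])
        exact ⟨y, by rw [Finset.coe_erase]; exact ⟨hy, hyne⟩, rfl⟩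
      exact sup_le_sup_left hle _ hwmem
    · have : ¬ Set.InjOn (frobMap R p M e) (s : Set M) := fun hIO =>
        hinj (Finset.card_image_of_injOn hIO)
      rw [Set.InjOn] at this
      push_neg at this
      obtain ⟨z₀, hz₀, z₁, hz₁, heq, hne⟩ := this
      refine ⟨z₀, hz₀, Submodule.mem_sup_right ?_⟩
      rw [frobPow_span]
      refine Submodule.subset_span ⟨z₁, ?_, heq.symm⟩
      rw [Finset.coe_erase]
      exact ⟨hz₁, fun h => hne (Set.mem_singleton_iff.mp h).symm⟩
  obtain ⟨z₀, hz₀s, hz₀mem⟩ := hz₀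
  set L'' := Submodule.span R ((s.erase z₀ : Finset M) : Set M) with hL''
  -- split `frobPow L` and use the unit trick
  have hLsplit : L = L'' ⊔ Submodule.span R {z₀} := by
    conv_lhs => rw [← hspan, ← Finset.insert_erase hz₀s]
    rw [Finset.coe_insert, Submodule.span_insert]
    exact sup_comm _ _
  have hsplit : frobPow R p M e L
      = frobPow R p M e L'' ⊔ Submodule.span A {frobMap R p M e z₀} := by
    rw [hLsplit, frobPow_sup, hL'']
    congr 1
    rw [frobPow_span, Set.image_singleton]
  rw [hsplit, Submodule.smul_sup] at hz₀mem
  have hz₀mem2 : frobMap R p M e z₀ ∈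
      (IsLocalRing.maximalIdeal A) • Submodule.span A {frobMap R p M e z₀}
        ⊔ frobPow R p M e L'' := by
    have hle : ((IsLocalRing.maximalIdeal A) • frobPow R p M e L''
        ⊔ (IsLocalRing.maximalIdeal A) • Submodule.span A {frobMap R p M e z₀})
        ⊔ frobPow R p M e L''
        ≤ (IsLocalRing.maximalIdeal A) • Submodule.span A {frobMap R p M e z₀}
          ⊔ frobPow R p M e L'' := by
      refine sup_le (sup_le ?_ le_sup_left) le_sup_right
      exact le_trans Submodule.smul_le_right le_sup_right
    exact hle hz₀mem
  obtain ⟨y, hy, u, hu, hyu⟩ := Submodule.mem_sup.mp hz₀mem2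
  obtain ⟨c, hc, rfl⟩ := mem_ideal_smul_span_singleton _ _ hy
  have hunit : IsUnit (1 - c) :=
    IsLocalRing.isUnit_one_sub_self_of_mem_nonunits c ((IsLocalRing.mem_maximalIdeal c).mp hc)
  have h1c : (1 - c) • frobMap R p M e z₀ ∈ frobPow R p M e L'' := by
    have heq2 : (1 - c) • frobMap R p M e z₀ = u := by
      rw [sub_smul, one_smul]
      exact (eq_sub_of_add_eq' hyu).symm
    rw [heq2]
    exact hu
  have hz₀cl : frobMap R p M e z₀ ∈ frobPow R p M e L'' := by
    obtain ⟨v, hv⟩ := hunit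
    have h3 := Submodule.smul_mem (frobPow R p M e L'') ((v⁻¹ : Aˣ) : A) h1c
    rwa [← hv, smul_smul, Units.inv_mul, one_smul] at h3
  -- `L''` is then a smaller F-reduction, contradiction
  have hsubs : frobClSet R p M L ⊆ frobClSet R p M L'' := by
    have hgens : ∀ z ∈ s, z ∈ frobClSet R p M L'' := by
      intro z hz
      by_cases hzz : z = z₀
      · subst hzz
        exact ⟨e, hz₀cl⟩
      · refine mem_frobClSet_of_mem R p M (Submodule.subset_span ?_)
        rw [Finset.coe_erase]
        exact ⟨hz, hzz⟩
    have := frobClSet_span_subset R p M s L'' hgens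
    rwa [hspan] at this
  have hL''le : L'' ≤ L := by
    rw [← hspan]
    exact Submodule.span_mono (by rw [Finset.coe_erase]; exact Set.diff_subset)
  have hL''lt : L'' < L := by
    refine lt_of_le_of_ne hL''le fun hEq => ?_
    have h4 : minGens L ≤ (s.erase z₀).card := minGens_le_card (hEq ▸ rfl)
    rw [Finset.card_erase_of_mem hz₀s, hcard] at h4
    omega
  have hcl : frobClSet R p M L'' = frobClSet R p M N := by
    apply Set.Subset.antisymm
    · exact hred ▸ frobClSet_mono R p M hL''le
    · rw [← hred]
      exact hsubs
  exact hmin L'' hL''lt hcl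

end MainArgument
/-- (Frobenius closure has spread.) Let `(R,m)` be Noetherian local of
characteristic `p > 0`, `N ⊆ M` finitely generated modules, and `L` a minimal
`F`-reduction of `N` in `M`.  Then the minimal number of generators of `L` equals the
minimal number of generators of `N^{[q]}_M` for all sufficiently large `q = p^e`;
consequently every minimal `F`-reduction of `N` has the same minimal number of
generators as `L`. -/
theorem frobenius_spread
    (R : Type*) [CommRing R] [IsNoetherianRing R] [IsLocalRing R]
    (p : ℕ) [Fact p.Prime] [CharP R p]
    (M : Type*) [AddCommGroup M] [Module R M] [Module.Finite R M]
    (N L : Submodule R M) (hLN : L ≤ N)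
    (hred : frobClSet R p M L = frobClSet R p M N)
    (hmin : ∀ P : Submodule R M, P < L → frobClSet R p M P ≠ frobClSet R p M N) :
    (∃ e₀ : ℕ, ∀ e ≥ e₀, minGens (frobPow R p M e N) = minGens L) ∧
    (∀ L' : Submodule R M, L' ≤ N →
      frobClSet R p M L' = frobClSet R p M N →
      (∀ P : Submodule R M, P < L' → frobClSet R p M P ≠ frobClSet R p M N) →
      minGens L' = minGens L) := by
    classical
  obtain ⟨e₀, he₀⟩ := frobPow_eventually_eq R p M N L hLN hred
  constructor
  · refine ⟨e₀, fun e he => ?_⟩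
    rw [he₀ e he]
    exact minGens_frobPow_eq R p M N L hLN hred hmin e
  · intro L' hL'N hred' hmin'
    obtain ⟨e₁, he₁⟩ := frobPow_eventually_eq R p M N L' hL'N hred'
    have h1 := minGens_frobPow_eq R p M N L hLN hred hmin (max e₀ e₁)
    have h2 := minGens_frobPow_eq R p M N L' hL'N hred' hmin' (max e₀ e₁)
    rw [← h1, ← h2, ← he₀ (max e₀ e₁) (le_max_left _ _), ← he₁ (max e₀ e₁) (le_max_right _ _)]
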